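/- arXiv:2410.23925 — 3 statements merged into one kernel-verified Lean document; each statement's English description precedes it below -/
import Mathlib

section
/- For ε > 0, the function u^ε(x,y) = (e^y + e^{−y})/(e^ε − e^{−ε}) + 1 solves the boundary value problem −u_{yy} + u = 1 in (0,1) × (0,ε), u_y(x,ε) = 1, −u_y(x,0) = 0, u_x(0,y) = 0, u_x(1,y) = 0; moreover sup over the domain of u^ε tends to +∞ as ε → 0⁺ (indeed u^ε(x,0) = 2/(e^ε − e^{−ε}) + 1 → ∞). -/
lemma hd1 (c y : ℝ) :
    HasDerivAt (fun y' => (Real.exp y' + Real.exp (-y')) / c + 1)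
      ((Real.exp y - Real.exp (-y)) / c) y := by
  have h1 := Real.hasDerivAt_exp y
  have h2 : HasDerivAt (fun y' : ℝ => Real.exp (-y')) (-Real.exp (-y)) y := by
    simpa [Function.comp_def] using (Real.hasDerivAt_exp (-y)).comp y (hasDerivAt_neg y)
  simpa [sub_eq_add_neg] using ((h1.add h2).div_const c).add_const 1

lemma hd2 (c y : ℝ) :
    HasDerivAt (fun y' => (Real.exp y' - Real.exp (-y')) / c)
      ((Real.exp y + Real.exp (-y)) / c) y := by
  have h1 := Real.hasDerivAt_exp y
  have h2 : HasDerivAt (fun y' : ℝ => Real.exp (-y')) (-Real.exp (-y)) y := by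
    simpa [Function.comp_def] using (Real.hasDerivAt_exp (-y)).comp y (hasDerivAt_neg y)
  simpa [sub_eq_add_neg] using (h1.sub h2).div_const c

/-- The function `u^ε(x,y) = (e^y + e^{−y})/(e^ε − e^{−ε}) + 1` solves
`−u_{yy} + u = 1` in `(0,1)×(0,ε)` with `u_y(x,ε)=1`, `−u_y(x,0)=0`,
`u_x(0,y)=0`, `u_x(1,y)=0`, and `u^ε(x,0) = 2/(e^ε−e^{−ε}) + 1 → +∞` as `ε → 0⁺`. -/
theorem stmt_3 (f : ℝ → ℝ → ℝ → ℝ)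
    (hf : ∀ ε x y, f ε x y =
      (Real.exp y + Real.exp (-y)) / (Real.exp ε - Real.exp (-ε)) + 1) :
    ∀ ε > 0,
      (∀ x y : ℝ, -(deriv (deriv (fun y' => f ε x y')) y) + f ε x y = 1) ∧
      (∀ x : ℝ, deriv (fun y' => f ε x y') ε = 1) ∧
      (∀ x : ℝ, -(deriv (fun y' => f ε x y') 0) = 0) ∧
      (∀ y : ℝ, deriv (fun x' => f ε x' y) 0 = 0) ∧
      (∀ y : ℝ, deriv (fun x' => f ε x' y) 1 = 0) ∧
      (∀ x : ℝ, f ε x 0 = 2 / (Real.exp ε - Real.exp (-ε)) + 1) ∧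
      (∀ x : ℝ, Filter.Tendsto (fun ε' => f ε' x 0)
        (nhdsWithin 0 (Set.Ioi 0)) Filter.atTop) := by
  intro ε hε
  set c := Real.exp ε - Real.exp (-ε) with hc
  have hcpos : 0 < c := sub_pos.mpr (Real.exp_lt_exp.mpr (by linarith))
  have hfun : ∀ x : ℝ, (fun y' => f ε x y') =
      fun y' => (Real.exp y' + Real.exp (-y')) / c + 1 := by
    intro x; funext y'; rw [hf]
  have hderiv : ∀ x : ℝ, deriv (fun y' => f ε x y') =
      fun y => (Real.exp y - Real.exp (-y)) / c := by
    intro x; funext y; rw [hfun x]; exact (hd1 c y).deriv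
  refine ⟨?_, ?_, ?_, ?_, ?_, ?_, ?_⟩
  · intro x y
    rw [hderiv x, (hd2 c y).deriv, hf]
    ring
  · intro x
    rw [hderiv x]
    simp only
    rw [← hc, div_self (ne_of_gt hcpos)]
  · intro x
    rw [hderiv x]
    simp
  · intro y
    have : (fun x' => f ε x' y) =
        fun _ => (Real.exp y + Real.exp (-y)) / c + 1 := by
      funext x'; rw [hf]
    rw [this, deriv_const]
  · intro y
    have : (fun x' => f ε x' y) =
        fun _ => (Real.exp y + Real.exp (-y)) / c + 1 := by
      funext x'; rw [hf]
    rw [this, deriv_const]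
  · intro x; rw [hf]; norm_num; rfl
  · intro x
    have heq : (fun ε' => f ε' x 0) =
        fun ε' => 2 / (Real.exp ε' - Real.exp (-ε')) + 1 := by
      funext ε'; rw [hf]; norm_num
    rw [heq]
    apply Filter.tendsto_atTop_add_const_right
    have hc0 : Filter.Tendsto (fun ε' => Real.exp ε' - Real.exp (-ε'))
        (nhdsWithin 0 (Set.Ioi 0)) (nhdsWithin 0 (Set.Ioi 0)) := by
      apply tendsto_nhdsWithin_of_tendsto_nhds_of_eventually_within
      · have : Filter.Tendsto (fun ε' : ℝ => Real.exp ε' - Real.exp (-ε'))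
            (nhds 0) (nhds (Real.exp 0 - Real.exp (-0))) :=
          (Real.continuous_exp.sub (Real.continuous_exp.comp continuous_neg)).tendsto 0
        simpa using this.mono_left nhdsWithin_le_nhds
      · filter_upwards [self_mem_nhdsWithin] with ε' (hε' : 0 < ε')
        exact sub_pos.mpr (Real.exp_lt_exp.mpr (by linarith))
    have := (tendsto_inv_nhdsGT_zero.comp hc0).const_mul_atTop (by norm_num : (0:ℝ) < 2)
    simpa [div_eq_mul_inv, Function.comp] using this
end

section
/- Let σ̃ ∈ M(k,N), b̃ ∈ ℝ^N with tr(σ̃ᵀσ̃) ≤ B and |b̃| ≤ B, and suppose tr(σ̃ᵀσ̃ (x−y)⊗(x−y)) > r₀²δ² and |x − y| ≤ r₁. Then with ψ_t as above, −tr(σ̃ᵀσ̃ D²ψ_t(x)) − b̃·Dψ_t(x) ≥ tC_t e^{t(r₀² − |x−y|²)}(4r₀²δ²t − 2B − 2r₁B). In particular, if 4r₀²δ²t − 2(1+r₁)B ≥ 1 and |x−y| ≤ r₁, then −tr(σ̃ᵀσ̃ D²ψ_t(x)) − b̃·Dψ_t(x) ≥ tC_t e^{t(r₀² − r₁²)}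 = t. -/
open Matrix
open scoped RealInnerProductSpace

/-- Barrier estimate: if `tr(σ̃ᵀσ̃) ≤ B`, `|b̃| ≤ B`,
`tr(σ̃ᵀσ̃ (x−y)⊗(x−y)) > r₀²δ²` and `|x−y| ≤ r₁`, then
`−tr(σ̃ᵀσ̃ D²ψ_t(x)) − b̃·Dψ_t(x) ≥ tC_t e^{t(r₀²−|x−y|²)}(4r₀²δ²t − 2B − 2r₁B)`;
and if `4r₀²δ²t − 2(1+r₁)B ≥ 1` it is `≥ t`. -/
theorem stmt_11 {k N : ℕ} (σ : Matrix (Fin k) (Fin N) ℝ)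
    (btil x y : EuclideanSpace ℝ (Fin N))
    (B δ r₀ r₁ t : ℝ)
    (hB : 0 < B) (hδ : 0 < δ) (h0 : 0 < r₀) (h01 : r₀ < r₁) (ht : 0 < t)
    (Ct : ℝ) (hCt : Ct = Real.exp (t * (r₁ ^ 2 - r₀ ^ 2)))
    (htr : (σᵀ * σ).trace ≤ B) (hbB : ‖btil‖ ≤ B)
    (hlow : r₀ ^ 2 * δ ^ 2 <
      (σᵀ * σ * Matrix.of (fun i j => (x - y) i * (x - y) j)).trace)
    (hxy : ‖x - y‖ ≤ r₁)
    (Dψ : EuclideanSpace ℝ (Fin N))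
    (hDψ : Dψ = (2 * t * Ct * Real.exp (t * (r₀ ^ 2 - ‖x - y‖ ^ 2))) • (x - y))
    (Hψ : Matrix (Fin N) (Fin N) ℝ)
    (hHψ : Hψ = (Ct * Real.exp (t * (r₀ ^ 2 - ‖x - y‖ ^ 2))) •
      ((2 * t) • (1 : Matrix (Fin N) (Fin N) ℝ) -
        (4 * t ^ 2) • Matrix.of (fun i j => (x - y) i * (x - y) j))) :
    (t * Ct * Real.exp (t * (r₀ ^ 2 - ‖x - y‖ ^ 2)) *
        (4 * r₀ ^ 2 * δ ^ 2 * t - 2 * B - 2 * r₁ * B)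
      ≤ -(σᵀ * σ * Hψ).trace - ⟪btil, Dψ⟫) ∧
    (1 ≤ 4 * r₀ ^ 2 * δ ^ 2 * t - 2 * (1 + r₁) * B →
      t ≤ -(σᵀ * σ * Hψ).trace - ⟪btil, Dψ⟫) := by

  set E := Real.exp (t * (r₀ ^ 2 - ‖x - y‖ ^ 2)) with hE
  set M := Matrix.of (fun i j => (x - y) i * (x - y) j) with hM
  have hEpos : 0 < E := Real.exp_pos _
  have hCtpos : 0 < Ct := hCt ▸ Real.exp_pos _
  have hcpos : 0 < Ct * E := mul_pos hCtpos hEpos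
  have htrace : (σᵀ * σ * Hψ).trace
      = Ct * E * (2 * t * (σᵀ * σ).trace - 4 * t ^ 2 * (σᵀ * σ * M).trace) := by
    rw [hHψ, Matrix.mul_smul, Matrix.trace_smul, Matrix.mul_sub, Matrix.mul_smul,
      Matrix.mul_smul, Matrix.mul_one, Matrix.trace_sub, Matrix.trace_smul,
      Matrix.trace_smul]
    simp only [smul_eq_mul]
  have hinner : ⟪btil, Dψ⟫ = (2 * t * Ct * E) * ⟪btil, x - y⟫ := by
    rw [hDψ, real_inner_smul_right]
  have hCS : ⟪btil, x - y⟫ ≤ r₁ * B := by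
    calc ⟪btil, x - y⟫ ≤ ‖btil‖ * ‖x - y‖ := real_inner_le_norm _ _
      _ ≤ B * r₁ := by
          apply mul_le_mul hbB hxy (norm_nonneg _) hB.le
      _ = r₁ * B := by ring
  have key : t * Ct * E * (4 * r₀ ^ 2 * δ ^ 2 * t - 2 * B - 2 * r₁ * B)
      ≤ -(σᵀ * σ * Hψ).trace - ⟪btil, Dψ⟫ := by
    rw [htrace, hinner]
    nlinarith [mul_pos ht hcpos, mul_pos (mul_pos ht ht) hcpos,
      mul_le_mul_of_nonneg_left htr (mul_pos ht hcpos).le,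
      mul_le_mul_of_nonneg_left hlow.le (mul_pos (mul_pos ht ht) hcpos).le,
      mul_le_mul_of_nonneg_left hCS (mul_pos ht hcpos).le]
  refine ⟨key, fun h1 => le_trans ?_ key⟩
  have hce : 1 ≤ Ct * E := by
    rw [hCt, hE, ← Real.exp_add]
    apply Real.one_le_exp
    nlinarith [pow_le_pow_left₀ (norm_nonneg (x - y)) hxy 2, ht]
  nlinarith [mul_pos ht hcpos]
end

section
/- Let Ω_ε be the thin domain over Ω with profiles εg⁻ < εg⁺. Suppose ψ̄ + M and ψ̲ − M are classical strict super- and subsolution barriers satisfying: ψ̲ − M ≤ ψ̄ + M on cl Ω_ε, and on cl Ω_ε, F(D²(ψ̄+M), D(ψ̄+M), ψ̄+M, ·) > 0 and F(D²(ψ̲−M), D(ψ̲−M), ψ̲−M, ·) < 0, with strict boundary inequalities γ^±·D(ψ̄+M) > β^± and γ^±·D(ψ̲−M) < β^± on the top/bottom boundaries and the corresponding lateral inequalities. If u is any viscosity solution to the boundary value problem and the maximum principle argument applies (F proper with constant α > 0), then ψ̲ − M ≤ u ≤ ψ̄ + M on cl Ω_ε; in particular sup |u| ≤ max(‖ψ̄‖_∞,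 ‖ψ̲‖_∞) + M. -/
open Matrix Set

/-- First-order derivative vector (gradient) of a test function on `ℝ^n`. -/
noncomputable def gradVec {n : ℕ} (φ : (Fin n → ℝ) → ℝ) (z : Fin n → ℝ) :
    Fin n → ℝ :=
  fun i => fderiv ℝ φ z (Pi.single i 1)

/-- Hessian matrix of a test function on `ℝ^n`. -/
noncomputable def hessMat {n : ℕ} (φ : (Fin n → ℝ) → ℝ) (z : Fin n → ℝ) :
    Matrix (Fin n) (Fin n) ℝ :=
  Matrix.of fun i j =>
    fderiv ℝ (fun w => fderiv ℝ φ w (Pi.single j 1)) z (Pi.single i 1)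

/-- Viscosity subsolution of the boundary value problem on the thin domain
`K = cl Ω_ε`, with interior `Kint`, top boundary `ΓT`, bottom boundary `ΓB`,
lateral boundary `ΓL`, oblique conditions `γ^±·Du = β^±` on top/bottom, and an
abstract lateral condition `Blat` (taking the value of `u`, the gradient of the
test function, and the point). At a maximum point of `u − φ` the interior
inequality or the appropriate boundary alternative(s) must hold, including the
corner alternatives. -/
def IsViscSubsol {n : ℕ} (K Kint ΓT ΓB ΓL : Set (Fin n → ℝ))
    (F : Matrix (Fin n) (Fin n) ℝ → (Fin n → ℝ) → ℝ → (Fin n → ℝ) → ℝ)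
    (γT γB : (Fin n → ℝ) → (Fin n → ℝ)) (βT βB : (Fin n → ℝ) → ℝ)
    (Blat : ℝ → (Fin n → ℝ) → (Fin n → ℝ) → Prop)
    (u : (Fin n → ℝ) → ℝ) : Prop :=
  UpperSemicontinuousOn u K ∧
  ∀ φ : (Fin n → ℝ) → ℝ, ContDiff ℝ 2 φ →
    ∀ zh ∈ K, (∀ z ∈ K, u z - φ z ≤ u zh - φ zh) →
      (zh ∈ Kint → F (hessMat φ zh) (gradVec φ zh) (u zh) zh ≤ 0) ∧
      (zh ∈ ΓT \ ΓL → F (hessMat φ zh) (gradVec φ zh) (u zh) zh ≤ 0 ∨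
        γT zh ⬝ᵥ gradVec φ zh ≤ βT zh) ∧
      (zh ∈ ΓB \ ΓL → F (hessMat φ zh) (gradVec φ zh) (u zh) zh ≤ 0 ∨
        γB zh ⬝ᵥ gradVec φ zh ≤ βB zh) ∧
      (zh ∈ ΓL \ (ΓT ∪ ΓB) → F (hessMat φ zh) (gradVec φ zh) (u zh) zh ≤ 0 ∨
        Blat (u zh) (gradVec φ zh) zh) ∧
      (zh ∈ ΓL ∩ ΓT → F (hessMat φ zh) (gradVec φ zh) (u zh) zh ≤ 0 ∨
        Blat (u zh) (gradVec φ zh) zh ∨ γT zh ⬝ᵥ gradVec φ zh ≤ βT zh) ∧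
      (zh ∈ ΓL ∩ ΓB → F (hessMat φ zh) (gradVec φ zh) (u zh) zh ≤ 0 ∨
        Blat (u zh) (gradVec φ zh) zh ∨ γB zh ⬝ᵥ gradVec φ zh ≤ βB zh)

/-- Viscosity supersolution: mirror image of `IsViscSubsol`. -/
def IsViscSupersol {n : ℕ} (K Kint ΓT ΓB ΓL : Set (Fin n → ℝ))
    (F : Matrix (Fin n) (Fin n) ℝ → (Fin n → ℝ) → ℝ → (Fin n → ℝ) → ℝ)
    (γT γB : (Fin n → ℝ) → (Fin n → ℝ)) (βT βB : (Fin n → ℝ) → ℝ)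
    (Blat : ℝ → (Fin n → ℝ) → (Fin n → ℝ) → Prop)
    (u : (Fin n → ℝ) → ℝ) : Prop :=
  LowerSemicontinuousOn u K ∧
  ∀ φ : (Fin n → ℝ) → ℝ, ContDiff ℝ 2 φ →
    ∀ zh ∈ K, (∀ z ∈ K, u zh - φ zh ≤ u z - φ z) →
      (zh ∈ Kint → 0 ≤ F (hessMat φ zh) (gradVec φ zh) (u zh) zh) ∧
      (zh ∈ ΓT \ ΓL → 0 ≤ F (hessMat φ zh) (gradVec φ zh) (u zh) zh ∨
        βT zh ≤ γT zh ⬝ᵥ gradVec φ zh) ∧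
      (zh ∈ ΓB \ ΓL → 0 ≤ F (hessMat φ zh) (gradVec φ zh) (u zh) zh ∨
        βB zh ≤ γB zh ⬝ᵥ gradVec φ zh) ∧
      (zh ∈ ΓL \ (ΓT ∪ ΓB) → 0 ≤ F (hessMat φ zh) (gradVec φ zh) (u zh) zh ∨
        Blat (u zh) (gradVec φ zh) zh) ∧
      (zh ∈ ΓL ∩ ΓT → 0 ≤ F (hessMat φ zh) (gradVec φ zh) (u zh) zh ∨
        Blat (u zh) (gradVec φ zh) zh ∨ βT zh ≤ γT zh ⬝ᵥ gradVec φ zh) ∧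
      (zh ∈ ΓL ∩ ΓB → 0 ≤ F (hessMat φ zh) (gradVec φ zh) (u zh) zh ∨
        Blat (u zh) (gradVec φ zh) zh ∨ βB zh ≤ γB zh ⬝ᵥ gradVec φ zh)


open Topology in
lemma usc_exists_max {X : Type*} [TopologicalSpace X] {K : Set X} (hK : IsCompact K)
    (hne : K.Nonempty) {f : X → ℝ} (hf : UpperSemicontinuousOn f K) :
    ∃ z ∈ K, ∀ x ∈ K, f x ≤ f z := by
  by_contra h
  push_neg at h
  choose y hyK hy using h
  have hV : ∀ z (hz : z ∈ K), ∃ V : Set X, IsOpen V ∧ z ∈ V ∧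
      ∀ x ∈ V ∩ K, f x < f (y z hz) := by
    intro z hz
    have hev := hf z hz (f (y z hz)) (hy z hz)
    rcases mem_nhdsWithin.1 hev with ⟨V, hVo, hzV, hVsub⟩
    exact ⟨V, hVo, hzV, fun x hx => hVsub hx⟩
  choose V hVopen hVmem hVsub using hV
  obtain ⟨t, hcover⟩ := hK.elim_nhds_subcover' (fun z hz => V z hz)
    (fun z hz => (hVopen z hz).mem_nhds (hVmem z hz))
  have htne : t.Nonempty := by
    rcases hne with ⟨x0, hx0⟩
    have hx0' := hcover hx0
    simp only [Set.mem_iUnion] at hx0'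
    obtain ⟨z, hz, _⟩ := hx0'
    exact ⟨z, hz⟩
  obtain ⟨z0, hz0t, hz0max⟩ := t.exists_max_image (fun z => f (y z z.2)) htne
  have hmem := hcover (hyK z0 z0.2)
  simp only [Set.mem_iUnion] at hmem
  obtain ⟨z1, hz1t, hz1⟩ := hmem
  have h1 : f (y z0 z0.2) < f (y z1 z1.2) := hVsub z1 z1.2 (y z0 z0.2) ⟨hz1, hyK z0 z0.2⟩
  exact absurd h1 (not_lt.2 (hz0max z1 hz1t))

lemma lsc_neg_usc {X : Type*} [TopologicalSpace X] {K : Set X} {f : X → ℝ}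
    (hf : LowerSemicontinuousOn f K) :
    UpperSemicontinuousOn (fun x => -f x) K := by
  intro x hx y hy
  have hy' : -f x < y := hy
  have := hf x hx (-y) (by linarith)
  filter_upwards [this] with w hw
  show -f w < y
  linarith

/-- Barrier comparison: if `ψ̄ + M` and `ψ̲ − M` are classical *strict* super-
and subsolution barriers (strict interior inequalities via the proper,
degenerate elliptic operator `F`, strict oblique inequalities on the top and
bottom boundaries, and strict lateral inequalities), then any viscosity
solution `u` satisfies `ψ̲ − M ≤ u ≤ ψ̄ + M` on `K = cl Ω_ε`; in particular
`|u| ≤ max(‖ψ̄‖_∞, ‖ψ̲‖_∞) + M`. -/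
theorem stmt_18 {n : ℕ} (K Kint ΓT ΓB ΓL : Set (Fin n → ℝ))
    (hKcomp : IsCompact K)
    (hcover : K = Kint ∪ ΓT ∪ ΓB ∪ ΓL) (hTB : ΓT ∩ ΓB = ∅)
    (F : Matrix (Fin n) (Fin n) ℝ → (Fin n → ℝ) → ℝ → (Fin n → ℝ) → ℝ)
    (α : ℝ) (hα : 0 < α)
    (hF : ∀ (X Y : Matrix (Fin n) (Fin n) ℝ) (p : Fin n → ℝ) (r s : ℝ)
      (z : Fin n → ℝ), (X - Y).PosSemidef → r ≤ s →
      F X p r z - α * r ≤ F Y p s z - α * s)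
    (γT γB : (Fin n → ℝ) → (Fin n → ℝ)) (βT βB : (Fin n → ℝ) → ℝ)
    (BlatSub BlatSup : ℝ → (Fin n → ℝ) → (Fin n → ℝ) → Prop)
    (ψsup ψsub : (Fin n → ℝ) → ℝ) (M : ℝ)
    (hψsupC2 : ContDiff ℝ 2 ψsup) (hψsubC2 : ContDiff ℝ 2 ψsub)
    (hord : ∀ z ∈ K, ψsub z - M ≤ ψsup z + M)
    -- ψ̄ + M is a classical strict supersolution:
    (hFsup : ∀ z ∈ K, 0 < F (hessMat ψsup z) (gradVec ψsup z) (ψsup z + M) z)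
    (hTsup : ∀ z ∈ ΓT, βT z < γT z ⬝ᵥ gradVec ψsup z)
    (hBsup : ∀ z ∈ ΓB, βB z < γB z ⬝ᵥ gradVec ψsup z)
    (hLsup : ∀ z ∈ ΓL, ∀ r : ℝ, ψsup z + M ≤ r → ¬ BlatSub r (gradVec ψsup z) z)
    -- ψ̲ − M is a classical strict subsolution:
    (hFsub : ∀ z ∈ K, F (hessMat ψsub z) (gradVec ψsub z) (ψsub z - M) z < 0)
    (hTsub : ∀ z ∈ ΓT, γT z ⬝ᵥ gradVec ψsub z < βT z)
    (hBsub : ∀ z ∈ ΓB, γB z ⬝ᵥ gradVec ψsub z < βB z)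
    (hLsub : ∀ z ∈ ΓL, ∀ r : ℝ, r ≤ ψsub z - M → ¬ BlatSup r (gradVec ψsub z) z)
    -- sup-norm bounds for the barriers:
    (Cs Ci : ℝ) (hCs : ∀ z ∈ K, |ψsup z| ≤ Cs) (hCi : ∀ z ∈ K, |ψsub z| ≤ Ci)
    -- u is a viscosity solution:
    (u : (Fin n → ℝ) → ℝ)
    (husub : IsViscSubsol K Kint ΓT ΓB ΓL F γT γB βT βB BlatSub u)
    (husup : IsViscSupersol K Kint ΓT ΓB ΓL F γT γB βT βB BlatSup u) :
    ∀ z ∈ K, (ψsub z - M ≤ u z ∧ u z ≤ ψsup z + M) ∧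
      |u z| ≤ max Cs Ci + M := by
  -- Upper bound: u ≤ ψsup + M on K
  intro z₀ hz₀
  have hne : K.Nonempty := ⟨z₀, hz₀⟩
  obtain ⟨husc, hsubP⟩ := husub
  obtain ⟨hlsc, hsupP⟩ := husup
  have hub : ∀ w ∈ K, u w ≤ ψsup w + M := by
    have hgusc : UpperSemicontinuousOn (fun w => u w - ψsup w) K := by
      have h1 : UpperSemicontinuousOn (fun w => u w + (-ψsup w)) K :=
        husc.add ((hψsupC2.continuous.neg.continuousOn :
          ContinuousOn (fun w => -ψsup w) K).upperSemicontinuousOn)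
      simpa [sub_eq_add_neg] using h1
    obtain ⟨zh, hzhK, hmax⟩ := usc_exists_max hKcomp hne hgusc
    have key := hsubP ψsup hψsupC2 zh hzhK hmax
    have hzh : u zh ≤ ψsup zh + M := by
      by_contra hc
      push_neg at hc
      have hpsd : (hessMat ψsup zh - hessMat ψsup zh).PosSemidef := by
        rw [sub_self]; exact Matrix.PosSemidef.zero
      have h0 := hF (hessMat ψsup zh) (hessMat ψsup zh) (gradVec ψsup zh)
        (ψsup zh + M) (u zh) zh hpsd hc.le
      have hFs := hFsup zh hzhK
      have hmul : 0 < α * (u zh - (ψsup zh + M)) := mul_pos hα (by linarith)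
      have hFpos : 0 < F (hessMat ψsup zh) (gradVec ψsup zh) (u zh) zh := by
        nlinarith
      obtain ⟨hint, hT, hB, hL, hLT, hLB⟩ := key
      have hKcases : zh ∈ Kint ∪ ΓT ∪ ΓB ∪ ΓL := hcover ▸ hzhK
      by_cases hzL : zh ∈ ΓL
      · by_cases hzT : zh ∈ ΓT
        · rcases hLT ⟨hzL, hzT⟩ with hF0 | hBl | hg
          · linarith
          · exact hLsup zh hzL (u zh) hc.le hBl
          · exact absurd hg (not_le.2 (hTsup zh hzT))
        · by_cases hzB : zh ∈ ΓB
          · rcases hLB ⟨hzL, hzB⟩ with hF0 | hBl | hg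
            · linarith
            · exact hLsup zh hzL (u zh) hc.le hBl
            · exact absurd hg (not_le.2 (hBsup zh hzB))
          · rcases hL ⟨hzL, by simp [hzT, hzB]⟩ with hF0 | hBl
            · linarith
            · exact hLsup zh hzL (u zh) hc.le hBl
      · rcases hKcases with ((hi | hT') | hB') | hL'
        · linarith [hint hi]
        · rcases hT ⟨hT', hzL⟩ with hF0 | hg
          · linarith
          · exact absurd hg (not_le.2 (hTsup zh hT'))
        · rcases hB ⟨hB', hzL⟩ with hF0 | hg
          · linarith
          · exact absurd hg (not_le.2 (hBsup zh hB'))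
        · exact hzL hL'
    intro w hw
    have := hmax w hw
    linarith
  have hlb : ∀ w ∈ K, ψsub w - M ≤ u w := by
    have hgusc : UpperSemicontinuousOn (fun w => ψsub w - u w) K := by
      have h1 : UpperSemicontinuousOn (fun w => ψsub w + (-u w)) K :=
        ((hψsubC2.continuous.continuousOn :
          ContinuousOn ψsub K).upperSemicontinuousOn).add (lsc_neg_usc hlsc)
      simpa [sub_eq_add_neg] using h1
    obtain ⟨zh, hzhK, hmax⟩ := usc_exists_max hKcomp hne hgusc
    have hmin : ∀ w ∈ K, u zh - ψsub zh ≤ u w - ψsub w := by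
      intro w hw; have := hmax w hw; linarith
    have key := hsupP ψsub hψsubC2 zh hzhK hmin
    have hzh : ψsub zh - M ≤ u zh := by
      by_contra hc
      push_neg at hc
      have hpsd : (hessMat ψsub zh - hessMat ψsub zh).PosSemidef := by
        rw [sub_self]; exact Matrix.PosSemidef.zero
      have h0 := hF (hessMat ψsub zh) (hessMat ψsub zh) (gradVec ψsub zh)
        (u zh) (ψsub zh - M) zh hpsd hc.le
      have hFs := hFsub zh hzhK
      have hmul : 0 < α * ((ψsub zh - M) - u zh) := mul_pos hα (by linarith)
      have hFneg : F (hessMat ψsub zh) (gradVec ψsub zh) (u zh) zh < 0 := by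
        nlinarith
      obtain ⟨hint, hT, hB, hL, hLT, hLB⟩ := key
      have hKcases : zh ∈ Kint ∪ ΓT ∪ ΓB ∪ ΓL := hcover ▸ hzhK
      by_cases hzL : zh ∈ ΓL
      · by_cases hzT : zh ∈ ΓT
        · rcases hLT ⟨hzL, hzT⟩ with hF0 | hBl | hg
          · linarith
          · exact hLsub zh hzL (u zh) hc.le hBl
          · exact absurd hg (not_le.2 (hTsub zh hzT))
        · by_cases hzB : zh ∈ ΓB
          · rcases hLB ⟨hzL, hzB⟩ with hF0 | hBl | hg
            · linarith
            · exact hLsub zh hzL (u zh) hc.le hBl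
            · exact absurd hg (not_le.2 (hBsub zh hzB))
          · rcases hL ⟨hzL, by simp [hzT, hzB]⟩ with hF0 | hBl
            · linarith
            · exact hLsub zh hzL (u zh) hc.le hBl
      · rcases hKcases with ((hi | hT') | hB') | hL'
        · linarith [hint hi]
        · rcases hT ⟨hT', hzL⟩ with hF0 | hg
          · linarith
          · exact absurd hg (not_le.2 (hTsub zh hT'))
        · rcases hB ⟨hB', hzL⟩ with hF0 | hg
          · linarith
          · exact absurd hg (not_le.2 (hBsub zh hB'))
        · exact hzL hL'
    intro w hw
    have := hmin w hw
    linarith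
  have h1 := hub z₀ hz₀
  have h2 := hlb z₀ hz₀
  refine ⟨⟨h2, h1⟩, ?_⟩
  rw [abs_le]
  constructor
  · have := hCi z₀ hz₀
    have h3 := neg_abs_le (ψsub z₀)
    have h4 := le_max_right Cs Ci
    linarith
  · have := hCs z₀ hz₀
    have h3 := le_abs_self (ψsup z₀)
    have h4 := le_max_left Cs Ci
    linarith
end
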